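/- (Proposition 1, SER bound for the variable-length encoder.) Let t ≥ 1, let B be a finite nonempty set of unit vectors in ℂ^t with a designated element x₀ ∈ B, let P ≥ 1, and set β = (t+1)·log P. Let q_B, q_B^v : ℂ^t → B be measurable maps such that: (i) for every h and every x ∈ B, |⟨q_B(h), h⟩| ≥ |⟨x, h⟩| (q_B is a maximum-SNR encoder for B); (ii) q_B^v(h) = x₀ whenever |⟨x, h⟩|²·P ≥ β for all x ∈ B, and q_B^v(h) = q_B(h) otherwise. Then ∫ Q(√(2·|⟨q_B^v(h), h⟩|²·P)) dμ(h) ≤ ∫ Q(√(2·|⟨q_B(h), h⟩|²·P)) dμ(h) + P^{−(t+1)}. -/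

import Mathlib

open MeasureTheory

noncomputable instance (t : ℕ) : MeasureSpace (EuclideanSpace ℂ (Fin t)) where
  volume := Measure.map (WithLp.toLp 2) (volume : Measure (Fin t → ℂ))

/-- The Gaussian tail function `Q(x) = (1/√(2π)) ∫_x^∞ exp(-u²/2) du`. -/
noncomputable def gaussianQ (x : ℝ) : ℝ :=
  (Real.sqrt (2 * Real.pi))⁻¹ * ∫ u in Set.Ioi x, Real.exp (-(u ^ 2) / 2)

/-- The standard complex Gaussian measure `CN(0, I_t)` on `ℂ^t`, with density
`h ↦ π^{-t} exp(-‖h‖²)` with respect to Lebesgue measure. -/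
noncomputable def stdCGauss (t : ℕ) : Measure (EuclideanSpace ℂ (Fin t)) :=
  volume.withDensity fun h => ENNReal.ofReal ((Real.pi ^ t)⁻¹ * Real.exp (-‖h‖ ^ 2))

lemma integrable_gauss_half : Integrable (fun u : ℝ => Real.exp (-(u ^ 2) / 2)) := by
  have := integrable_exp_neg_mul_sq (by norm_num : (0:ℝ) < 1/2)
  convert this using 2 with u
  ring_nf

lemma gaussianQ_nonneg (x : ℝ) : 0 ≤ gaussianQ x := by
  apply mul_nonneg (inv_nonneg.2 (Real.sqrt_nonneg _))
  exact setIntegral_nonneg measurableSet_Ioi fun u _ => (Real.exp_pos _).le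

lemma gaussianQ_anti : Antitone gaussianQ := by
  intro x y hxy
  apply mul_le_mul_of_nonneg_left _ (inv_nonneg.2 (Real.sqrt_nonneg _))
  apply setIntegral_mono_set integrable_gauss_half.integrableOn
  · exact Filter.Eventually.of_forall fun u => (Real.exp_pos _).le
  · exact Filter.Eventually.of_forall (Set.Ioi_subset_Ioi hxy)

lemma gauss_Ioi_zero : ∫ v in Set.Ioi (0:ℝ), Real.exp (-(v ^ 2) / 2)
    = Real.sqrt (2 * Real.pi) / 2 := by
  have := integral_gaussian_Ioi (1/2)
  have h2 : ∀ v : ℝ, -(1/2 : ℝ) * v ^ 2 = -(v ^ 2) / 2 := fun v => by ring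
  simp_rw [h2] at this
  rw [this]
  congr 2
  ring

lemma gaussianQ_le {x : ℝ} (hx : 0 ≤ x) : gaussianQ x ≤ Real.exp (-(x ^ 2) / 2) := by
  have sqrt_pos : 0 < Real.sqrt (2 * Real.pi) :=
    Real.sqrt_pos.2 (by positivity)
  have key : ∫ u in Set.Ioi x, Real.exp (-(u ^ 2) / 2)
      ≤ Real.exp (-(x ^ 2) / 2) * (Real.sqrt (2 * Real.pi) / 2) := by
    have h1 : ∫ u in Set.Ioi x, Real.exp (-(x ^ 2) / 2) * Real.exp (-((u - x) ^ 2) / 2)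
        = Real.exp (-(x ^ 2) / 2) * (Real.sqrt (2 * Real.pi) / 2) := by
      rw [integral_const_mul]
      congr 1
      have : ∫ u in Set.Ioi x, Real.exp (-((u - x) ^ 2) / 2)
          = ∫ v in Set.Ioi (0:ℝ), Real.exp (-(v ^ 2) / 2) := by
        rw [← integral_indicator measurableSet_Ioi, ← integral_indicator measurableSet_Ioi,
          ← integral_sub_right_eq_self (fun u => (Set.Ioi (0:ℝ)).indicator
            (fun v => Real.exp (-(v ^ 2) / 2)) u) x]
        congr 1 with u
        by_cases hu : x < u <;>
          simp [Set.indicator_apply, Set.mem_Ioi, hu, sub_pos]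
      rw [this, gauss_Ioi_zero]
    rw [← h1]
    refine setIntegral_mono_on integrable_gauss_half.integrableOn
      (((integrable_gauss_half.comp_sub_right x).const_mul _).integrableOn)
      measurableSet_Ioi (fun u hu => ?_)
    rw [← Real.exp_add]
    apply Real.exp_le_exp.2
    have hxu : x ≤ u := le_of_lt hu
    nlinarith [sq_nonneg (u - x), mul_nonneg hx (sub_nonneg.2 hxu)]
  calc gaussianQ x ≤ (Real.sqrt (2 * Real.pi))⁻¹ *
        (Real.exp (-(x ^ 2) / 2) * (Real.sqrt (2 * Real.pi) / 2)) :=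
        mul_le_mul_of_nonneg_left key (inv_nonneg.2 sqrt_pos.le)
    _ = Real.exp (-(x ^ 2) / 2) / 2 := by field_simp
    _ ≤ Real.exp (-(x ^ 2) / 2) := by linarith [Real.exp_pos (-(x ^ 2) / 2)]

lemma integrable_cgauss : Integrable (fun z : ℂ => Real.pi⁻¹ * Real.exp (-‖z‖ ^ 2)) := by
  have h := (GaussianFourier.integrable_cexp_neg_mul_sq_norm_add (V := ℂ)
    (b := 1) (by norm_num) 0 0).norm
  apply Integrable.const_mul
  have h2 : (fun a : ℂ => ‖Complex.exp (-1 * (‖a‖:ℂ) ^ 2 + 0 * ((inner ℝ (0:ℂ) a : ℝ) : ℂ))‖)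
      = fun a : ℂ => Real.exp (-‖a‖ ^ 2) := by
    funext a
    rw [Complex.norm_exp]
    simp [← Complex.ofReal_pow]
  rw [← h2]
  exact h

lemma integral_cgauss : ∫ z : ℂ, Real.pi⁻¹ * Real.exp (-‖z‖ ^ 2) = 1 := by
  have h := GaussianFourier.integral_rexp_neg_mul_sq_norm (V := ℂ) (b := 1) one_pos
  simp only [neg_mul, one_mul, Complex.finrank_real_complex] at h
  have h2 : ((2:ℕ):ℝ)/2 = 1 := by norm_num
  rw [integral_const_mul, h, h2, Real.rpow_one, div_one, inv_mul_cancel₀ Real.pi_ne_zero]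

lemma cgauss_prod (t : ℕ) (h : EuclideanSpace ℂ (Fin t)) :
    (Real.pi ^ t)⁻¹ * Real.exp (-‖h‖ ^ 2)
      = ∏ i, (Real.pi⁻¹ * Real.exp (-‖h i‖ ^ 2)) := by
  rw [EuclideanSpace.norm_eq, Real.sq_sqrt (by positivity)]
  rw [Finset.prod_mul_distrib, Finset.prod_const, ← Real.exp_sum]
  simp [← inv_pow]

lemma integrable_stdCGauss_density (t : ℕ) :
    Integrable (fun h : EuclideanSpace ℂ (Fin t) =>
      (Real.pi ^ t)⁻¹ * Real.exp (-‖h‖ ^ 2)) := by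
  simp_rw [cgauss_prod]
  exact (integrable_map_equiv (MeasurableEquiv.toLp 2 (Fin t → ℂ)) _).2 <| Integrable.fintype_prod (f := fun _ : Fin t => fun z : ℂ =>
    Real.pi⁻¹ * Real.exp (-‖z‖ ^ 2)) (fun _ => integrable_cgauss)

lemma integral_stdCGauss_density (t : ℕ) :
    ∫ h : EuclideanSpace ℂ (Fin t), (Real.pi ^ t)⁻¹ * Real.exp (-‖h‖ ^ 2) = 1 := by
  simp_rw [cgauss_prod]
  have : (∫ h : EuclideanSpace ℂ (Fin t), ∏ i, (Real.pi⁻¹ * Real.exp (-‖h i‖ ^ 2)))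
      = ∫ h : Fin t → ℂ, ∏ i, (Real.pi⁻¹ * Real.exp (-‖h i‖ ^ 2)) :=
    integral_map_equiv (MeasurableEquiv.toLp 2 (Fin t → ℂ))
      (fun h : EuclideanSpace ℂ (Fin t) => ∏ i, (Real.pi⁻¹ * Real.exp (-‖h i‖ ^ 2)))
  rw [this, volume_pi, integral_fintype_prod_eq_pow (ι := Fin t)
    (f := fun z : ℂ => Real.pi⁻¹ * Real.exp (-‖z‖ ^ 2)), integral_cgauss, one_pow]

instance stdCGauss_prob (t : ℕ) : IsProbabilityMeasure (stdCGauss t) := by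
  constructor
  rw [stdCGauss, withDensity_apply _ MeasurableSet.univ, Measure.restrict_univ,
    ← ofReal_integral_eq_lintegral_ofReal (integrable_stdCGauss_density t)
      (Filter.Eventually.of_forall fun h => by positivity),
    integral_stdCGauss_density]
  simp

/-- Proposition 1 (SER bound): the variable-length encoder `q_B^v`, which uses the default
vector `x₀` whenever every codebook vector already provides SNR at least `β = (t+1) log P`,
loses at most `P^{-(t+1)}` in SER over the maximum-SNR encoder `q_B`. -/
theorem vlq_ser_bound (t : ℕ) (ht : 1 ≤ t)
    (B : Finset (EuclideanSpace ℂ (Fin t))) (hB : B.Nonempty)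
    (hBunit : ∀ x ∈ B, ‖x‖ = 1)
    (x₀ : EuclideanSpace ℂ (Fin t)) (hx₀ : x₀ ∈ B)
    (P : ℝ) (hP : 1 ≤ P)
    (qB qBv : EuclideanSpace ℂ (Fin t) → EuclideanSpace ℂ (Fin t))
    (hqBmeas : Measurable qB) (hqBvmeas : Measurable qBv)
    (hqBmem : ∀ h, qB h ∈ B) (hqBvmem : ∀ h, qBv h ∈ B)
    (hqBmax : ∀ h, ∀ x ∈ B, ‖(inner ℂ x h : ℂ)‖ ≤ ‖(inner ℂ (qB h) h : ℂ)‖)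
    (hv₀ : ∀ h, (∀ x ∈ B, ‖(inner ℂ x h : ℂ)‖ ^ 2 * P ≥ ((t : ℝ) + 1) * Real.log P) →
      qBv h = x₀)
    (hv₁ : ∀ h, ¬ (∀ x ∈ B, ‖(inner ℂ x h : ℂ)‖ ^ 2 * P ≥ ((t : ℝ) + 1) * Real.log P) →
      qBv h = qB h) :
    ∫ h, gaussianQ (Real.sqrt (2 * ‖(inner ℂ (qBv h) h : ℂ)‖ ^ 2 * P)) ∂(stdCGauss t)
      ≤ (∫ h, gaussianQ (Real.sqrt (2 * ‖(inner ℂ (qB h) h : ℂ)‖ ^ 2 * P)) ∂(stdCGauss t))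
        + (P ^ (t + 1))⁻¹ := by
  classical
  set μ := stdCGauss t with hμ
  set β := ((t:ℝ)+1) * Real.log P with hβ
  have hP0 : (0:ℝ) < P := lt_of_lt_of_le one_pos hP
  have hβ0 : 0 ≤ β := mul_nonneg (by positivity) (Real.log_nonneg hP)
  set c := (P ^ (t+1))⁻¹ with hc
  have hc0 : 0 ≤ c := by positivity
  set S := {h : EuclideanSpace ℂ (Fin t) |
    ∀ x ∈ B, ‖(inner ℂ x h : ℂ)‖ ^ 2 * P ≥ β} with hSdef
  -- measurability
  have hinnermeas : ∀ q : EuclideanSpace ℂ (Fin t) → EuclideanSpace ℂ (Fin t),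
      Measurable q → Measurable (fun h => (inner ℂ (q h) h : ℂ)) := by
    intro q hq
    exact Continuous.measurable continuous_inner |>.comp (hq.prodMk measurable_id)
  have hargmeas : ∀ q : EuclideanSpace ℂ (Fin t) → EuclideanSpace ℂ (Fin t),
      Measurable q →
      Measurable (fun h => Real.sqrt (2 * ‖(inner ℂ (q h) h : ℂ)‖ ^ 2 * P)) := by
    intro q hq
    exact (((((hinnermeas q hq).norm).pow_const 2).const_mul 2).mul_const P).sqrt
  have hfvmeas : Measurable
      (fun h => gaussianQ (Real.sqrt (2 * ‖(inner ℂ (qBv h) h : ℂ)‖ ^ 2 * P))) :=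
    gaussianQ_anti.measurable.comp (hargmeas qBv hqBvmeas)
  have hfBmeas : Measurable
      (fun h => gaussianQ (Real.sqrt (2 * ‖(inner ℂ (qB h) h : ℂ)‖ ^ 2 * P))) :=
    gaussianQ_anti.measurable.comp (hargmeas qB hqBmeas)
  have hSmeas : MeasurableSet S := by
    have : S = ⋂ x ∈ B, {h : EuclideanSpace ℂ (Fin t) | β ≤ ‖(inner ℂ x h : ℂ)‖ ^ 2 * P} := by
      ext h
      simp [hSdef, Set.mem_iInter, ge_iff_le]
    rw [this]
    refine MeasurableSet.biInter B.countable_toSet fun x _ => ?_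
    refine measurableSet_le measurable_const ?_
    have : Measurable (fun h : EuclideanSpace ℂ (Fin t) => (inner ℂ x h : ℂ)) :=
      Continuous.measurable continuous_inner |>.comp (measurable_const.prodMk measurable_id)
    exact (this.norm.pow_const 2).mul_const P
  -- integrability
  have hIntQ : ∀ f : EuclideanSpace ℂ (Fin t) → ℝ,
      Measurable (fun h => gaussianQ (Real.sqrt (f h))) →
      Integrable (fun h => gaussianQ (Real.sqrt (f h))) μ := by
    intro f hf
    refine (integrable_const (gaussianQ 0)).mono' hf.aestronglyMeasurable ?_
    filter_upwards with h
    rw [Real.norm_eq_abs, abs_of_nonneg (gaussianQ_nonneg _)]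
    exact gaussianQ_anti (Real.sqrt_nonneg _)
  have hintv : Integrable
      (fun h => gaussianQ (Real.sqrt (2 * ‖(inner ℂ (qBv h) h : ℂ)‖ ^ 2 * P))) μ :=
    hIntQ _ hfvmeas
  have hintB : Integrable
      (fun h => gaussianQ (Real.sqrt (2 * ‖(inner ℂ (qB h) h : ℂ)‖ ^ 2 * P))) μ :=
    hIntQ _ hfBmeas
  have hind : Integrable (S.indicator (fun _ => c)) μ :=
    (integrable_const c).indicator hSmeas
  -- key constant bound
  have hexpc : Real.exp (-β) = c := by
    rw [Real.exp_neg, hc]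
    congr 1
    rw [hβ, show ((t:ℝ)+1) = ((t+1 : ℕ):ℝ) by push_cast; ring,
      Real.exp_nat_mul, Real.exp_log hP0]
  -- pointwise bound
  have hpt : ∀ h, gaussianQ (Real.sqrt (2 * ‖(inner ℂ (qBv h) h : ℂ)‖ ^ 2 * P))
      ≤ gaussianQ (Real.sqrt (2 * ‖(inner ℂ (qB h) h : ℂ)‖ ^ 2 * P))
        + S.indicator (fun _ => c) h := by
    intro h
    by_cases hhS : h ∈ S
    · rw [Set.indicator_of_mem hhS]
      have h1 : β ≤ ‖(inner ℂ x₀ h : ℂ)‖ ^ 2 * P := hhS x₀ hx₀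
      have hq : qBv h = x₀ := hv₀ h hhS
      have hbound : gaussianQ (Real.sqrt (2 * ‖(inner ℂ (qBv h) h : ℂ)‖ ^ 2 * P)) ≤ c := by
        rw [hq]
        have h2 : Real.sqrt (2 * β) ≤ Real.sqrt (2 * ‖(inner ℂ x₀ h : ℂ)‖ ^ 2 * P) :=
          Real.sqrt_le_sqrt (by nlinarith)
        calc gaussianQ (Real.sqrt (2 * ‖(inner ℂ x₀ h : ℂ)‖ ^ 2 * P))
            ≤ gaussianQ (Real.sqrt (2 * β)) := gaussianQ_anti h2
          _ ≤ Real.exp (-(Real.sqrt (2 * β) ^ 2) / 2) := gaussianQ_le (Real.sqrt_nonneg _)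
          _ = Real.exp (-β) := by
              rw [Real.sq_sqrt (by linarith)]
              congr 1
              ring
          _ = c := hexpc
      linarith [gaussianQ_nonneg (Real.sqrt (2 * ‖(inner ℂ (qB h) h : ℂ)‖ ^ 2 * P))]
    · rw [Set.indicator_of_notMem hhS, hv₁ h hhS, add_zero]
  -- conclude
  calc ∫ h, gaussianQ (Real.sqrt (2 * ‖(inner ℂ (qBv h) h : ℂ)‖ ^ 2 * P)) ∂μ
      ≤ ∫ h, (gaussianQ (Real.sqrt (2 * ‖(inner ℂ (qB h) h : ℂ)‖ ^ 2 * P))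
          + S.indicator (fun _ => c) h) ∂μ := integral_mono hintv (hintB.add hind) hpt
    _ = (∫ h, gaussianQ (Real.sqrt (2 * ‖(inner ℂ (qB h) h : ℂ)‖ ^ 2 * P)) ∂μ)
          + ∫ h, S.indicator (fun _ => c) h ∂μ := integral_add hintB hind
    _ ≤ (∫ h, gaussianQ (Real.sqrt (2 * ‖(inner ℂ (qB h) h : ℂ)‖ ^ 2 * P)) ∂μ) + c := by
        gcongr
        rw [integral_indicator_const _ hSmeas, smul_eq_mul]
        have hle : (μ S).toReal ≤ 1 := by
          have h1 : μ S ≤ 1 := prob_le_one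
          simpa using ENNReal.toReal_mono (by simp) h1
        calc (μ S).toReal * c ≤ 1 * c := by gcongr
          _ = c := one_mul c
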